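/- Suppose |V_c| = 1 for every prompt c and let C := min_c |E_c| + 1 be the number of choices. Then for all training distributions and base models p̂ there exists a threshold t ∈ [0,1] such that err ≥ 2·(1 − 1/C)·erriv(f̂_t). -/

import Mathlib

open Finset

open scoped Classical

open MeasureTheory

private lemma aux_intA (q d : ℝ) :
    IntegrableOn (fun t => if q ≤ t then d else 0) (Set.Icc (0:ℝ) 1) := by
  have h : (fun t : ℝ => if q ≤ t then d else 0) = (Set.Ici q).indicator (fun _ => d) := by
    funext t; by_cases h : q ≤ t <;> simp [Set.indicator, h]
  rw [h]
  exact (integrableOn_const (by rw [Real.volume_Icc]; exact ENNReal.ofReal_ne_top)).indicator measurableSet_Ici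

private lemma aux_intB (p d : ℝ) :
    IntegrableOn (fun t => if t < p then d else 0) (Set.Icc (0:ℝ) 1) := by
  have h : (fun t : ℝ => if t < p then d else 0) = (Set.Iio p).indicator (fun _ => d) := by
    funext t; by_cases h : t < p <;> simp [Set.indicator, h]
  rw [h]
  exact (integrableOn_const (by rw [Real.volume_Icc]; exact ENNReal.ofReal_ne_top)).indicator measurableSet_Iio

private lemma aux_valA (q d : ℝ) (h0 : 0 ≤ q) (h1 : q ≤ 1) :
    ∫ t in Set.Icc (0:ℝ) 1, (if q ≤ t then d else 0) = d * (1 - q) := by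
  have h : (fun t : ℝ => if q ≤ t then d else 0) = (Set.Ici q).indicator (fun _ => d) := by
    funext t; by_cases h : q ≤ t <;> simp [Set.indicator, h]
  rw [h, setIntegral_indicator measurableSet_Ici]
  have h2 : Set.Icc (0:ℝ) 1 ∩ Set.Ici q = Set.Icc q 1 := by
    ext t
    simp only [Set.mem_inter_iff, Set.mem_Ici, Set.mem_Icc]
    constructor
    · rintro ⟨⟨_, hc⟩, ha⟩; exact ⟨ha, hc⟩
    · rintro ⟨ha, hb⟩; exact ⟨⟨le_trans h0 ha, hb⟩, ha⟩
  rw [h2, setIntegral_const, measureReal_def, Real.volume_Icc, ENNReal.toReal_ofReal (by linarith), smul_eq_mul]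
  ring

private lemma aux_valB (p d : ℝ) (h0 : 0 ≤ p) (h1 : p ≤ 1) :
    ∫ t in Set.Icc (0:ℝ) 1, (if t < p then d else 0) = d * p := by
  have h : (fun t : ℝ => if t < p then d else 0) = (Set.Iio p).indicator (fun _ => d) := by
    funext t; by_cases h : t < p <;> simp [Set.indicator, h]
  rw [h, setIntegral_indicator measurableSet_Iio]
  have h2 : Set.Icc (0:ℝ) 1 ∩ Set.Iio p = Set.Ico 0 p := by
    ext t
    simp only [Set.mem_inter_iff, Set.mem_Iio, Set.mem_Icc, Set.mem_Ico]
    constructor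
    · rintro ⟨⟨hb, _⟩, ha⟩; exact ⟨hb, ha⟩
    · rintro ⟨ha, hb⟩; exact ⟨⟨ha, le_trans (le_of_lt hb) h1⟩, hb⟩
  rw [h2, setIntegral_const, measureReal_def, Real.volume_Ico, ENNReal.toReal_ofReal (by linarith), smul_eq_mul]
  ring

set_option maxHeartbeats 1000000

/-- (Theorem 5 of the paper.)  In the pure multiple-choice setting
(`|V_c| = 1`, `Cnum := min_c |E_c| + 1` choices), for every base model `phat` there exists
a threshold `t ∈ [0,1]` with `err ≥ 2·(1 − 1/Cnum)·erriv(f̂_t)`. -/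
theorem stmt5 {C R : Type} [Fintype C] [Nonempty C] [Fintype R]
    (μ : C → ℝ) (hμ0 : ∀ c, 0 ≤ μ c) (hμ1 : ∑ c, μ c = 1)
    (Rset : C → Finset R) (a : C → R)
    (ha : ∀ c, a c ∈ Rset c)
    (hEne : ∀ c, (Rset c \ {a c}).Nonempty)
    (phat : C → R → ℝ)
    (hphat0 : ∀ c r, 0 ≤ phat c r)
    (hphat1 : ∀ c, ∑ r ∈ Rset c, phat c r = 1)
    (hphatsupp : ∀ c, ∀ r ∉ Rset c, phat c r = 0) :
    -- number of choices C = min_c |E_c| + 1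
    let Cnum : ℕ := (Finset.univ.inf' Finset.univ_nonempty
      (fun c => (Rset c \ {a c}).card)) + 1
    -- D: with prob 1/2 draw c ∼ μ and r = a_c; with prob 1/2 draw c ∼ μ and r uniform in E_c
    let D : C → R → ℝ := fun c r => (if r = a c then μ c / 2 else 0) +
      (if r ∈ Rset c \ {a c} then μ c / (2 * ((Rset c \ {a c}).card : ℝ)) else 0)
    -- misclassification rate of the thresholded classifier f̂_t
    let erriv : ℝ → ℝ := fun t => ∑ c, ∑ r ∈ Rset c,
      if (r = a c ∧ ¬ (phat c r > t)) ∨ (r ≠ a c ∧ phat c r > t) then D c r else 0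
    -- generative error rate
    let err : ℝ := ∑ c, μ c * ∑ r ∈ Rset c \ {a c}, phat c r
    ∃ t ∈ Set.Icc (0 : ℝ) 1, err ≥ 2 * (1 - 1 / (Cnum : ℝ)) * erriv t := by
  intro Cnum D erriv err
  have herriv : erriv = fun t : ℝ => ∑ c, ∑ r ∈ Rset c,
      (if (r = a c ∧ ¬ (phat c r > t)) ∨ (r ≠ a c ∧ phat c r > t) then D c r else 0) := rfl
  have herr : err = ∑ c, μ c * ∑ r ∈ Rset c \ {a c}, phat c r := rfl
  have hCnumdef : Cnum = (Finset.univ.inf' Finset.univ_nonempty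
      (fun c => (Rset c \ {a c}).card)) + 1 := rfl
  have hcardpos : ∀ c : C, 0 < (Rset c \ {a c}).card := fun c => Finset.card_pos.2 (hEne c)
  have hCle : ∀ c : C, Cnum ≤ (Rset c \ {a c}).card + 1 := fun c =>
    Nat.add_le_add_right (Finset.inf'_le _ (Finset.mem_univ c)) 1
  have hCnum2 : 2 ≤ Cnum := by
    have h1 : 1 ≤ Finset.univ.inf' Finset.univ_nonempty
        (fun c => (Rset c \ {a c}).card) :=
      Finset.le_inf' _ _ fun c _ => hcardpos c
    rw [hCnumdef]
    omega
  have hple : ∀ c, ∀ r ∈ Rset c, phat c r ≤ 1 := fun c r hr => by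
    rw [← hphat1 c]; exact Finset.single_le_sum (fun i _ => hphat0 c i) hr
  have hD1 : ∀ c : C, D c (a c) = μ c / 2 := by
    intro c
    show (if a c = a c then μ c / 2 else 0) +
      (if a c ∈ Rset c \ {a c} then μ c / (2 * ((Rset c \ {a c}).card : ℝ)) else 0) = μ c / 2
    simp
  have hD2 : ∀ c : C, ∀ r ∈ Rset c \ {a c},
      D c r = μ c / (2 * ((Rset c \ {a c}).card : ℝ)) := by
    intro c r hr
    have hrne : r ≠ a c := by
      rcases Finset.mem_sdiff.1 hr with ⟨_, h2⟩; simpa using h2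
    show (if r = a c then μ c / 2 else 0) +
      (if r ∈ Rset c \ {a c} then μ c / (2 * ((Rset c \ {a c}).card : ℝ)) else 0) = _
    rw [if_neg hrne, if_pos hr, zero_add]
  -- rewriting the per-(c,r) summand
  have hsummand : ∀ (c : C) (r : R),
      (fun t : ℝ => if (r = a c ∧ ¬ (phat c r > t)) ∨ (r ≠ a c ∧ phat c r > t)
        then D c r else 0)
      = if r = a c then (fun t : ℝ => if phat c r ≤ t then D c r else 0)
        else (fun t : ℝ => if t < phat c r then D c r else 0) := by
    intro c r
    by_cases h : r = a c
    · rw [if_pos h]; funext t; subst h; simp [not_lt]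
    · rw [if_neg h]; funext t; simp [h]
  have hintF : ∀ (c : C) (r : R), IntegrableOn
      (fun t : ℝ => if (r = a c ∧ ¬ (phat c r > t)) ∨ (r ≠ a c ∧ phat c r > t)
        then D c r else 0) (Set.Icc (0:ℝ) 1) := by
    intro c r
    rw [hsummand c r]
    split
    · exact aux_intA _ _
    · exact aux_intB _ _
  have hinterriv : IntegrableOn erriv (Set.Icc (0:ℝ) 1) := by
    rw [herriv]
    apply integrable_finset_sum
    intro c _
    apply integrable_finset_sum
    intro r _
    exact hintF c r
  -- computing the integral
  have hI1 : (∫ t in Set.Icc (0:ℝ) 1, erriv t)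
      = ∑ c, ∫ t in Set.Icc (0:ℝ) 1, ∑ r ∈ Rset c,
          (if (r = a c ∧ ¬ (phat c r > t)) ∨ (r ≠ a c ∧ phat c r > t) then D c r else 0) := by
    simp only [herriv]
    exact integral_finset_sum _ (fun c _ => integrable_finset_sum _ (fun r _ => hintF c r))
  have hI2 : ∀ c : C, (∫ t in Set.Icc (0:ℝ) 1, ∑ r ∈ Rset c,
        (if (r = a c ∧ ¬ (phat c r > t)) ∨ (r ≠ a c ∧ phat c r > t) then D c r else 0))
      = ∑ r ∈ Rset c, ∫ t in Set.Icc (0:ℝ) 1,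
          (if (r = a c ∧ ¬ (phat c r > t)) ∨ (r ≠ a c ∧ phat c r > t) then D c r else 0) :=
    fun c => integral_finset_sum _ (fun r _ => hintF c r)
  have hval : ∀ c : C, ∀ r ∈ Rset c, (∫ t in Set.Icc (0:ℝ) 1,
        (if (r = a c ∧ ¬ (phat c r > t)) ∨ (r ≠ a c ∧ phat c r > t) then D c r else 0))
      = if r = a c then D c r * (1 - phat c r) else D c r * phat c r := by
    intro c r hr
    have h0 := hphat0 c r
    have h1 := hple c r hr
    by_cases h : r = a c
    · rw [hsummand c r, if_pos h, if_pos h]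
      exact aux_valA _ _ h0 h1
    · rw [hsummand c r, if_neg h, if_neg h]
      exact aux_valB _ _ h0 h1
  have hIval : (∫ t in Set.Icc (0:ℝ) 1, erriv t)
      = ∑ c, ∑ r ∈ Rset c,
          (if r = a c then D c r * (1 - phat c r) else D c r * phat c r) := by
    rw [hI1]
    refine Finset.sum_congr rfl fun c _ => ?_
    rw [hI2 c]
    exact Finset.sum_congr rfl fun r hr => hval c r hr
  -- the average argument
  have hvol0 : volume (Set.Icc (0:ℝ) 1) ≠ 0 := by
    rw [Real.volume_Icc]; norm_num
  have hvolt : volume (Set.Icc (0:ℝ) 1) ≠ ⊤ := by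
    rw [Real.volume_Icc]; exact ENNReal.ofReal_ne_top
  obtain ⟨t, htS, htle⟩ := exists_le_setAverage hvol0 hvolt hinterriv
  have havg : (⨍ x in Set.Icc (0:ℝ) 1, erriv x) = ∫ x in Set.Icc (0:ℝ) 1, erriv x := by
    rw [setAverage_eq, measureReal_def, Real.volume_Icc]
    norm_num
  rw [havg] at htle
  refine ⟨t, htS, ?_⟩
  -- the key bound on the integral
  have hfac : 0 ≤ 2 * (1 - 1/(Cnum:ℝ)) := by
    have h1 : (2:ℝ) ≤ (Cnum:ℝ) := by exact_mod_cast hCnum2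
    have h2 : 1/(Cnum:ℝ) ≤ 1 := by
      rw [div_le_one (by linarith)]; linarith
    linarith
  have hIbound : 2 * (1 - 1/(Cnum:ℝ)) * (∫ x in Set.Icc (0:ℝ) 1, erriv x) ≤ err := by
    rw [hIval, herr, Finset.mul_sum]
    apply Finset.sum_le_sum
    intro c _
    have hsplit : ∑ r ∈ Rset c, (if r = a c then D c r * (1 - phat c r) else D c r * phat c r)
        = μ c / 2 * (∑ r ∈ Rset c \ {a c}, phat c r)
          + μ c / (2 * ((Rset c \ {a c}).card : ℝ)) * (∑ r ∈ Rset c \ {a c}, phat c r) := by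
      rw [Finset.sum_eq_add_sum_sdiff_singleton_of_mem (ha c)]
      rw [if_pos rfl, hD1 c]
      have h1 : (1 : ℝ) - phat c (a c) = ∑ r ∈ Rset c \ {a c}, phat c r := by
        have h := hphat1 c
        rw [Finset.sum_eq_add_sum_sdiff_singleton_of_mem (ha c)] at h
        linarith
      have h2 : ∑ r ∈ Rset c \ {a c},
            (if r = a c then D c r * (1 - phat c r) else D c r * phat c r)
          = ∑ r ∈ Rset c \ {a c}, μ c / (2 * ((Rset c \ {a c}).card : ℝ)) * phat c r := by
        refine Finset.sum_congr rfl fun r hr => ?_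
        have hrne : r ≠ a c := by
          rcases Finset.mem_sdiff.1 hr with ⟨_, hh⟩; simpa using hh
        rw [if_neg hrne, hD2 c r hr]
      rw [h2, h1, ← Finset.mul_sum]
    rw [hsplit]
    have hmm1 : (1:ℝ) ≤ ((Rset c \ {a c}).card : ℝ) := by exact_mod_cast hcardpos c
    have hnm : (Cnum : ℝ) ≤ ((Rset c \ {a c}).card : ℝ) + 1 := by exact_mod_cast hCle c
    have hn2 : (2:ℝ) ≤ (Cnum:ℝ) := by exact_mod_cast hCnum2
    have hE0 : 0 ≤ ∑ r ∈ Rset c \ {a c}, phat c r :=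
      Finset.sum_nonneg fun r _ => hphat0 c r
    have hμc := hμ0 c
    have hmm0 : ((Rset c \ {a c}).card : ℝ) ≠ 0 := by linarith
    have hn0 : (Cnum:ℝ) ≠ 0 := by linarith
    set E : ℝ := ∑ r ∈ Rset c \ {a c}, phat c r
    set mm : ℝ := ((Rset c \ {a c}).card : ℝ)
    have key : 2*(1-1/(Cnum:ℝ))*(μ c/2*E + μ c/(2*mm)*E)
        = ((1-1/(Cnum:ℝ))*(1+1/mm))*(μ c * E) := by
      field_simp
    rw [key]
    have hle1 : (1-1/(Cnum:ℝ))*(1+1/mm) ≤ 1 := by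
      rw [← sub_nonneg]
      have h1 : 0 < (Cnum:ℝ) := by linarith
      have h2 : 0 < mm := by linarith
      have expand : 1 - (1-1/(Cnum:ℝ))*(1+1/mm)
          = ((Cnum:ℝ) * mm - ((Cnum:ℝ) - 1) * (mm + 1)) / ((Cnum:ℝ) * mm) := by
        field_simp
      rw [expand]
      apply div_nonneg _ (by positivity)
      nlinarith
    nlinarith [mul_nonneg hμc hE0]
  calc err ≥ 2 * (1 - 1/(Cnum:ℝ)) * (∫ x in Set.Icc (0:ℝ) 1, erriv x) := hIbound
    _ ≥ 2 * (1 - 1/(Cnum:ℝ)) * erriv t := mul_le_mul_of_nonneg_left htle hfac
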